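/- Let Tₙ be the algebra of upper triangular n×n complex matrices and Dₙ the diagonal matrices. If L is a Lie ideal in Tₙ and K = L ∩ Sₙ where Sₙ is the strictly upper triangular matrices, then K is a two-sided associative ideal of Tₙ. -/

import Mathlib

open Matrix

lemma aux_mul_strict_left {n : ℕ} {x a : Matrix (Fin n) (Fin n) ℂ}
    (hx : ∀ i j : Fin n, j ≤ i → x i j = 0)
    (ha : ∀ i j : Fin n, j < i → a i j = 0) :
    ∀ i j : Fin n, j ≤ i → (a * x) i j = 0 := by
  intro i j hij
  rw [Matrix.mul_apply]
  apply Finset.sum_eq_zero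
  intro k _
  rcases lt_or_ge k i with h | h
  · rw [ha i k h, zero_mul]
  · rw [hx k j (hij.trans h), mul_zero]

lemma aux_mul_strict_right {n : ℕ} {x a : Matrix (Fin n) (Fin n) ℂ}
    (hx : ∀ i j : Fin n, j ≤ i → x i j = 0)
    (ha : ∀ i j : Fin n, j < i → a i j = 0) :
    ∀ i j : Fin n, j ≤ i → (x * a) i j = 0 := by
  intro i j hij
  rw [Matrix.mul_apply]
  apply Finset.sum_eq_zero
  intro k _
  rcases le_or_gt k i with h | h
  · rw [hx i k h, zero_mul]
  · rw [ha k j (hij.trans_lt h), mul_zero]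

lemma aux_sandwich {n : ℕ} (M : Matrix (Fin n) (Fin n) ℂ) (i j k l : Fin n)
    (h : M j k = 0) :
    Matrix.single i j (1:ℂ) * M * Matrix.single k l (1:ℂ) = 0 := by
  ext p q
  by_cases hq : q = l
  · subst hq
    by_cases hp : p = i
    · subst hp
      simp [h]
    · simp [hp]
  · simp [hq]

lemma aux_ut {n : ℕ} (i j : Fin n) (hij : i ≤ j) :
    ∀ p q : Fin n, q < p → Matrix.single i j (1:ℂ) p q = 0 := by
  intro p q h
  apply Matrix.single_apply_of_ne
  rintro ⟨rfl, rfl⟩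
  exact absurd hij (not_le.2 h)

lemma aux_diag_mul_mem {n : ℕ} (L : Submodule ℂ (Matrix (Fin n) (Fin n) ℂ))
    (hLie : ∀ x ∈ L, ∀ a : Matrix (Fin n) (Fin n) ℂ,
      (∀ i j : Fin n, j < i → a i j = 0) → x * a - a * x ∈ L)
    (x : Matrix (Fin n) (Fin n) ℂ) (hxL : x ∈ L)
    (hxs : ∀ i j : Fin n, j ≤ i → x i j = 0) (k : Fin n) :
    Matrix.single k k (1:ℂ) * x ∈ L ∧ x * Matrix.single k k (1:ℂ) ∈ L := by
  have hEut := aux_ut k k le_rfl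
  have hyL : x * Matrix.single k k (1:ℂ) - Matrix.single k k (1:ℂ) * x ∈ L :=
    hLie x hxL _ hEut
  have hwL := hLie _ hyL _ hEut
  have hExE : Matrix.single k k (1:ℂ) * x * Matrix.single k k (1:ℂ) = 0 :=
    aux_sandwich x k k k k (hxs k k le_rfl)
  have hEE : Matrix.single k k (1:ℂ) * Matrix.single k k (1:ℂ) = Matrix.single k k (1:ℂ) := by
    rw [Matrix.single_mul_single_same, one_mul]
  have hw : (x * Matrix.single k k (1:ℂ) - Matrix.single k k (1:ℂ) * x) * Matrix.single k k (1:ℂ)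
        - Matrix.single k k (1:ℂ) * (x * Matrix.single k k (1:ℂ) - Matrix.single k k (1:ℂ) * x)
      = x * Matrix.single k k (1:ℂ) + Matrix.single k k (1:ℂ) * x := by
    calc (x * Matrix.single k k (1:ℂ) - Matrix.single k k (1:ℂ) * x) * Matrix.single k k (1:ℂ)
          - Matrix.single k k (1:ℂ) * (x * Matrix.single k k (1:ℂ) - Matrix.single k k (1:ℂ) * x)
        = x * (Matrix.single k k (1:ℂ) * Matrix.single k k (1:ℂ))
          + (Matrix.single k k (1:ℂ) * Matrix.single k k (1:ℂ)) * x
          - (Matrix.single k k (1:ℂ) * x * Matrix.single k k (1:ℂ)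
            + Matrix.single k k (1:ℂ) * x * Matrix.single k k (1:ℂ)) := by noncomm_ring
      _ = _ := by rw [hEE, hExE]; simp
  rw [hw] at hwL
  constructor
  · have h1 : Matrix.single k k (1:ℂ) * x = (2:ℂ)⁻¹ •
        ((x * Matrix.single k k (1:ℂ) + Matrix.single k k (1:ℂ) * x)
          - (x * Matrix.single k k (1:ℂ) - Matrix.single k k (1:ℂ) * x)) := by
      match_scalars <;> norm_num
    rw [h1]
    exact L.smul_mem _ (L.sub_mem hwL hyL)
  · have h2 : x * Matrix.single k k (1:ℂ) = (2:ℂ)⁻¹ •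
        ((x * Matrix.single k k (1:ℂ) + Matrix.single k k (1:ℂ) * x)
          + (x * Matrix.single k k (1:ℂ) - Matrix.single k k (1:ℂ) * x)) := by
      match_scalars <;> norm_num
    rw [h2]
    exact L.smul_mem _ (L.add_mem hwL hyL)

lemma aux_strict_mul_mem {n : ℕ} (L : Submodule ℂ (Matrix (Fin n) (Fin n) ℂ))
    (hLie : ∀ x ∈ L, ∀ a : Matrix (Fin n) (Fin n) ℂ,
      (∀ i j : Fin n, j < i → a i j = 0) → x * a - a * x ∈ L)
    (x : Matrix (Fin n) (Fin n) ℂ) (hxL : x ∈ L)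
    (hxs : ∀ i j : Fin n, j ≤ i → x i j = 0) (i j : Fin n) (hlt : i < j) :
    Matrix.single i j (1:ℂ) * x ∈ L ∧ x * Matrix.single i j (1:ℂ) ∈ L := by
  have hne : i ≠ j := ne_of_lt hlt
  have hEut := aux_ut i j hlt.le
  have hyL : x * Matrix.single i j (1:ℂ) - Matrix.single i j (1:ℂ) * x ∈ L :=
    hLie x hxL _ hEut
  constructor
  · -- E * x ∈ L : bracket with E_ii
    have hmem := hLie _ hyL _ (aux_ut i i le_rfl)
    have hEEii : Matrix.single i j (1:ℂ) * Matrix.single i i (1:ℂ) = 0 :=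
      Matrix.single_mul_single_of_ne (h := hne.symm) ..
    have hEiiE : Matrix.single i i (1:ℂ) * Matrix.single i j (1:ℂ)
        = Matrix.single i j (1:ℂ) := by
      rw [Matrix.single_mul_single_same, one_mul]
    have hs1 : Matrix.single i j (1:ℂ) * x * Matrix.single i i (1:ℂ) = 0 :=
      aux_sandwich x i j i i (hxs j i hlt.le)
    have hs2 : Matrix.single i i (1:ℂ) * x * Matrix.single i j (1:ℂ) = 0 :=
      aux_sandwich x i i i j (hxs i i le_rfl)
    have heq : (x * Matrix.single i j (1:ℂ) - Matrix.single i j (1:ℂ) * x) * Matrix.single i i (1:ℂ)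
          - Matrix.single i i (1:ℂ) * (x * Matrix.single i j (1:ℂ) - Matrix.single i j (1:ℂ) * x)
        = Matrix.single i j (1:ℂ) * x := by
      calc (x * Matrix.single i j (1:ℂ) - Matrix.single i j (1:ℂ) * x) * Matrix.single i i (1:ℂ)
            - Matrix.single i i (1:ℂ) * (x * Matrix.single i j (1:ℂ) - Matrix.single i j (1:ℂ) * x)
          = x * (Matrix.single i j (1:ℂ) * Matrix.single i i (1:ℂ))
            - Matrix.single i j (1:ℂ) * x * Matrix.single i i (1:ℂ)
            - Matrix.single i i (1:ℂ) * x * Matrix.single i j (1:ℂ)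
            + (Matrix.single i i (1:ℂ) * Matrix.single i j (1:ℂ)) * x := by noncomm_ring
        _ = _ := by rw [hEEii, hs1, hs2, hEiiE]; simp
    rwa [heq] at hmem
  · -- x * E ∈ L : bracket with E_jj
    have hmem := hLie _ hyL _ (aux_ut j j le_rfl)
    have hEEjj : Matrix.single i j (1:ℂ) * Matrix.single j j (1:ℂ)
        = Matrix.single i j (1:ℂ) := by
      rw [Matrix.single_mul_single_same, one_mul]
    have hEjjE : Matrix.single j j (1:ℂ) * Matrix.single i j (1:ℂ) = 0 :=
      Matrix.single_mul_single_of_ne (h := hne.symm) ..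
    have hs1 : Matrix.single i j (1:ℂ) * x * Matrix.single j j (1:ℂ) = 0 :=
      aux_sandwich x i j j j (hxs j j le_rfl)
    have hs2 : Matrix.single j j (1:ℂ) * x * Matrix.single i j (1:ℂ) = 0 :=
      aux_sandwich x j j i j (hxs j i hlt.le)
    have heq : (x * Matrix.single i j (1:ℂ) - Matrix.single i j (1:ℂ) * x) * Matrix.single j j (1:ℂ)
          - Matrix.single j j (1:ℂ) * (x * Matrix.single i j (1:ℂ) - Matrix.single i j (1:ℂ) * x)
        = x * Matrix.single i j (1:ℂ) := by
      calc (x * Matrix.single i j (1:ℂ) - Matrix.single i j (1:ℂ) * x) * Matrix.single j j (1:ℂ)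
            - Matrix.single j j (1:ℂ) * (x * Matrix.single i j (1:ℂ) - Matrix.single i j (1:ℂ) * x)
          = x * (Matrix.single i j (1:ℂ) * Matrix.single j j (1:ℂ))
            - Matrix.single i j (1:ℂ) * x * Matrix.single j j (1:ℂ)
            - Matrix.single j j (1:ℂ) * x * Matrix.single i j (1:ℂ)
            + (Matrix.single j j (1:ℂ) * Matrix.single i j (1:ℂ)) * x := by noncomm_ring
        _ = _ := by rw [hEEjj, hs1, hs2, hEjjE]; simp
    rwa [heq] at hmem

lemma aux_basis_mul_mem {n : ℕ} (L : Submodule ℂ (Matrix (Fin n) (Fin n) ℂ))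
    (hLie : ∀ x ∈ L, ∀ a : Matrix (Fin n) (Fin n) ℂ,
      (∀ i j : Fin n, j < i → a i j = 0) → x * a - a * x ∈ L)
    (x : Matrix (Fin n) (Fin n) ℂ) (hxL : x ∈ L)
    (hxs : ∀ i j : Fin n, j ≤ i → x i j = 0)
    (i j : Fin n) (hij : i ≤ j) :
    Matrix.single i j (1:ℂ) * x ∈ L ∧ x * Matrix.single i j (1:ℂ) ∈ L := by
  rcases eq_or_lt_of_le hij with rfl | hlt
  · exact aux_diag_mul_mem L hLie x hxL hxs i
  · exact aux_strict_mul_mem L hLie x hxL hxs i j hlt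

theorem offDiagonal_part_of_lie_ideal_is_ideal
    {n : ℕ} (L : Submodule ℂ (Matrix (Fin n) (Fin n) ℂ))
    (hLsub : ∀ x ∈ L, ∀ i j : Fin n, j < i → x i j = 0)
    (hLie : ∀ x ∈ L, ∀ a : Matrix (Fin n) (Fin n) ℂ,
      (∀ i j : Fin n, j < i → a i j = 0) → x * a - a * x ∈ L) :
    ∀ x ∈ L, (∀ i j : Fin n, j ≤ i → x i j = 0) →
      ∀ a : Matrix (Fin n) (Fin n) ℂ, (∀ i j : Fin n, j < i → a i j = 0) →
        (a * x ∈ L ∧ (∀ i j : Fin n, j ≤ i → (a * x) i j = 0)) ∧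
        (x * a ∈ L ∧ (∀ i j : Fin n, j ≤ i → (x * a) i j = 0)) := by
  intro x hxL hxs a ha
  have key := aux_basis_mul_mem L hLie x hxL hxs
  have hsb : ∀ p q : Fin n, Matrix.single p q (a p q) = a p q • Matrix.single p q (1:ℂ) := by
    intro p q
    rw [Matrix.smul_single, smul_eq_mul, mul_one]
  refine ⟨⟨?_, aux_mul_strict_left hxs ha⟩, ?_, aux_mul_strict_right hxs ha⟩
  · have hax : a * x = ∑ p : Fin n, ∑ q : Fin n, a p q • (Matrix.single p q (1:ℂ) * x) := by
      conv_lhs => rw [matrix_eq_sum_single a]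
      rw [Finset.sum_mul]
      refine Finset.sum_congr rfl fun p _ => ?_
      rw [Finset.sum_mul]
      refine Finset.sum_congr rfl fun q _ => ?_
      rw [hsb, smul_mul_assoc]
    rw [hax]
    refine Submodule.sum_mem L fun p _ => Submodule.sum_mem L fun q _ => ?_
    by_cases h : q < p
    · rw [ha p q h, zero_smul]; exact L.zero_mem
    · exact L.smul_mem _ ((key p q (not_lt.1 h)).1)
  · have hxa : x * a = ∑ p : Fin n, ∑ q : Fin n, a p q • (x * Matrix.single p q (1:ℂ)) := by
      conv_lhs => rw [matrix_eq_sum_single a]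
      rw [Finset.mul_sum]
      refine Finset.sum_congr rfl fun p _ => ?_
      rw [Finset.mul_sum]
      refine Finset.sum_congr rfl fun q _ => ?_
      rw [hsb, mul_smul_comm]
    rw [hxa]
    refine Submodule.sum_mem L fun p _ => Submodule.sum_mem L fun q _ => ?_
    by_cases h : q < p
    · rw [ha p q h, zero_smul]; exact L.zero_mem
    · exact L.smul_mem _ ((key p q (not_lt.1 h)).2)
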